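/- In the setting where delta(J) = dim(gamma + sum_{j in J} kappa_j) - |J| for polytopes gamma, kappa_1,...,kappa_{k-1}: if min over all J of delta(J) equals 1, then the set {J : delta(J) = 1} has a unique maximal element (with respect to inclusion). -/

import Mathlib

open scoped Pointwise

/-- A polytope: the convex hull of a nonempty finite set of points. -/
def IsPolytope {V : Type*} [AddCommGroup V] [Module ℝ V] (P : Set V) : Prop :=
  ∃ s : Finset V, s.Nonempty ∧ P = convexHull ℝ (s : Set V)

/-- The dimension of (the affine span of) a subset of a real vector space. -/
noncomputable def polyDim {V : Type*} [AddCommGroup V] [Module ℝ V] (P : Set V) : ℕ :=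
  Module.finrank ℝ (affineSpan ℝ P).direction

/-- `δ(J) = dim(γ + ∑_{j ∈ J} κ_j) - |J|`. -/
noncomputable def deltaFn {V : Type*} [AddCommGroup V] [Module ℝ V] {m : ℕ}
    (γ : Set V) (κ : Fin m → Set V) (J : Finset (Fin m)) : ℤ :=
  (polyDim (γ + ∑ j ∈ J, κ j) : ℤ) - J.card

section Aux

variable {V : Type*} [AddCommGroup V] [Module ℝ V]

lemma vectorSpan_add {A B : Set V} (hA : A.Nonempty) (hB : B.Nonempty) :
    vectorSpan ℝ (A + B) = vectorSpan ℝ A ⊔ vectorSpan ℝ B := by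
  apply le_antisymm
  · rw [vectorSpan_def]
    rw [Submodule.span_le]
    rintro x hx
    rw [Set.mem_vsub] at hx
    obtain ⟨u, hu, w, hw, rfl⟩ := hx
    obtain ⟨a, ha, b, hb, rfl⟩ := hu
    obtain ⟨a', ha', b', hb', rfl⟩ := hw
    have : a + b -ᵥ (a' + b') = (a -ᵥ a') + (b -ᵥ b') := by
      simp only [vsub_eq_sub]; abel
    rw [this]
    exact Submodule.add_mem _
      (Submodule.mem_sup_left (vsub_mem_vectorSpan ℝ ha ha'))
      (Submodule.mem_sup_right (vsub_mem_vectorSpan ℝ hb hb'))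
  · apply sup_le
    · rw [vectorSpan_def, Submodule.span_le]
      rintro x hx
      rw [Set.mem_vsub] at hx
      obtain ⟨a, ha, a', ha', rfl⟩ := hx
      obtain ⟨b, hb⟩ := hB
      have : a -ᵥ a' = (a + b) -ᵥ (a' + b) := by simp only [vsub_eq_sub]; abel
      rw [this]
      exact vsub_mem_vectorSpan ℝ (Set.add_mem_add ha hb) (Set.add_mem_add ha' hb)
    · rw [vectorSpan_def, Submodule.span_le]
      rintro x hx
      rw [Set.mem_vsub] at hx
      obtain ⟨b, hb, b', hb', rfl⟩ := hx
      obtain ⟨a, ha⟩ := hA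
      have : b -ᵥ b' = (a + b) -ᵥ (a + b') := by simp only [vsub_eq_sub]; abel
      rw [this]
      exact vsub_mem_vectorSpan ℝ (Set.add_mem_add ha hb) (Set.add_mem_add ha hb')

omit [Module ℝ V] in
lemma sum_sets_nonempty {m : ℕ} (κ : Fin m → Set V) (hκ : ∀ j, (κ j).Nonempty)
    (J : Finset (Fin m)) : (∑ j ∈ J, κ j).Nonempty := by
  classical
  induction J using Finset.induction with
  | empty => exact ⟨0, by simp [Set.mem_zero]⟩
  | insert _ _ h ih =>
      rw [Finset.sum_insert h]
      exact (hκ _).add ih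

lemma polytope_nonempty {P : Set V} (h : IsPolytope P) : P.Nonempty := by
  obtain ⟨s, hs, rfl⟩ := h
  exact hs.to_set.mono (subset_convexHull ℝ _)

lemma polytope_fd {P : Set V} (h : IsPolytope P) :
    FiniteDimensional ℝ (vectorSpan ℝ P) := by
  obtain ⟨s, hs, rfl⟩ := h
  have : vectorSpan ℝ ((convexHull ℝ) (s : Set V)) = vectorSpan ℝ (s : Set V) := by
    rw [← direction_affineSpan, ← direction_affineSpan, affineSpan_convexHull]
  rw [this]
  exact finiteDimensional_vectorSpan_of_finite ℝ s.finite_toSet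

variable {m : ℕ} (γ : Set V) (κ : Fin m → Set V)

lemma vectorSpan_gamma_sum (hγ : γ.Nonempty) (hκ : ∀ j, (κ j).Nonempty)
    (J : Finset (Fin m)) :
    vectorSpan ℝ (γ + ∑ j ∈ J, κ j) =
      vectorSpan ℝ γ ⊔ J.sup (fun j => vectorSpan ℝ (κ j)) := by
  classical
  induction J using Finset.induction with
  | empty =>
      simp only [Finset.sum_empty, Finset.sup_empty, sup_bot_eq]
      rw [vectorSpan_add hγ ⟨0, by simp [Set.mem_zero]⟩]
      have h0 : (0 : Set V) = ({0} : Set V) := rfl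
      rw [h0, vectorSpan_singleton, sup_bot_eq]
  | @insert a J' h ih =>
      rw [Finset.sum_insert h, Finset.sup_insert]
      have hsum := sum_sets_nonempty κ hκ J'
      have : γ + (κ a + ∑ j ∈ J', κ j) = (γ + ∑ j ∈ J', κ j) + κ a := by
        rw [add_comm (κ a), ← add_assoc]
      rw [this, vectorSpan_add (hγ.add hsum) (hκ a), ih]
      rw [sup_assoc, sup_comm (J'.sup _)]

lemma delta_submodular (hγ : IsPolytope γ) (hκ : ∀ j, IsPolytope (κ j))
    (I J : Finset (Fin m)) :
    deltaFn γ κ (I ∩ J) + deltaFn γ κ (I ∪ J) ≤ deltaFn γ κ I + deltaFn γ κ J := by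
  classical
  have hγn := polytope_nonempty hγ
  have hκn : ∀ j, (κ j).Nonempty := fun j => polytope_nonempty (hκ j)
  set G := vectorSpan ℝ γ with hG
  set f : Fin m → Submodule ℝ V := fun j => vectorSpan ℝ (κ j) with hf
  have hfd : ∀ K : Finset (Fin m), FiniteDimensional ℝ (G ⊔ K.sup f : Submodule ℝ V) := by
    intro K
    have hGfd : FiniteDimensional ℝ G := polytope_fd hγ
    have hfj : ∀ j, FiniteDimensional ℝ (f j) := fun j => polytope_fd (hκ j)
    have hK : FiniteDimensional ℝ (K.sup f : Submodule ℝ V) := by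
      induction K using Finset.induction with
      | empty => simpa using inferInstanceAs (FiniteDimensional ℝ (⊥ : Submodule ℝ V))
      | @insert a K' h ih =>
          rw [Finset.sup_insert]
          have := hfj a
          exact Submodule.finiteDimensional_sup _ _
    exact Submodule.finiteDimensional_sup _ _
  have hdim : ∀ K : Finset (Fin m),
      polyDim (γ + ∑ j ∈ K, κ j) = Module.finrank ℝ (G ⊔ K.sup f : Submodule ℝ V) := by
    intro K
    unfold polyDim
    rw [direction_affineSpan, vectorSpan_gamma_sum γ κ hγn hκn K]
  -- submodularity of finrank
  have key : Module.finrank ℝ (G ⊔ (I ∩ J).sup f : Submodule ℝ V)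
      + Module.finrank ℝ (G ⊔ (I ∪ J).sup f : Submodule ℝ V)
      ≤ Module.finrank ℝ (G ⊔ I.sup f : Submodule ℝ V)
      + Module.finrank ℝ (G ⊔ J.sup f : Submodule ℝ V) := by
    have h1 : G ⊔ (I ∪ J).sup f = (G ⊔ I.sup f) ⊔ (G ⊔ J.sup f) := by
      rw [Finset.sup_union]
      rw [sup_sup_sup_comm, sup_idem]
    have h2 : G ⊔ (I ∩ J).sup f ≤ (G ⊔ I.sup f) ⊓ (G ⊔ J.sup f) := by
      apply le_inf
      · exact sup_le_sup_left (Finset.sup_mono Finset.inter_subset_left) _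
      · exact sup_le_sup_left (Finset.sup_mono Finset.inter_subset_right) _
    have hI := hfd I
    have hJ := hfd J
    have heq := Submodule.finrank_sup_add_finrank_inf_eq (G ⊔ I.sup f) (G ⊔ J.sup f)
    have hinf : FiniteDimensional ℝ ((G ⊔ I.sup f) ⊓ (G ⊔ J.sup f) : Submodule ℝ V) :=
      Submodule.finiteDimensional_inf_left _ _
    have hmono := Submodule.finrank_mono (R := ℝ) h2
    rw [h1]
    omega
  have hcard := Finset.card_union_add_card_inter I J
  unfold deltaFn
  rw [hdim, hdim, hdim, hdim]
  have : ((I ∪ J).card : ℤ) + (I ∩ J).card = I.card + J.card := by exact_mod_cast hcard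
  omega

end Aux

/-- If `min_J δ(J) = 1`, then `{J : δ(J) = 1}` has a unique maximal
element with respect to inclusion (which is in fact a greatest element). -/
theorem delta_one_unique_maximal {V : Type*} [AddCommGroup V] [Module ℝ V]
    (k : ℕ) (γ : Set V) (κ : Fin (k - 1) → Set V)
    (hγ : IsPolytope γ) (hκ : ∀ j, IsPolytope (κ j))
    (h1 : ∀ J : Finset (Fin (k - 1)), 1 ≤ deltaFn γ κ J)
    (h2 : ∃ J : Finset (Fin (k - 1)), deltaFn γ κ J = 1) :
    ∃! J₁ : Finset (Fin (k - 1)), deltaFn γ κ J₁ = 1 ∧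
      ∀ J, deltaFn γ κ J = 1 → J ⊆ J₁ := by
  classical
  have hunion : ∀ I J : Finset (Fin (k - 1)),
      deltaFn γ κ I = 1 → deltaFn γ κ J = 1 → deltaFn γ κ (I ∪ J) = 1 := by
    intro I J hI hJ
    have hsub := delta_submodular γ κ hγ hκ I J
    have h3 := h1 (I ∩ J)
    have h4 := h1 (I ∪ J)
    omega
  set S : Finset (Finset (Fin (k - 1))) :=
    Finset.univ.filter (fun J => deltaFn γ κ J = 1) with hS
  have hSne : S.Nonempty := by
    obtain ⟨J, hJ⟩ := h2
    exact ⟨J, by simp only [hS, Finset.mem_filter]; exact ⟨Finset.mem_univ _, hJ⟩⟩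
  set J₁ := S.sup' hSne id with hJ₁
  have hJ₁delta : deltaFn γ κ J₁ = 1 := by
    apply Finset.sup'_induction (p := fun X => deltaFn γ κ X = 1) hSne id
    · intro a ha b hb
      exact hunion a b ha hb
    · intro b hb
      simp only [hS, Finset.mem_filter] at hb
      exact hb.2
  have hJ₁max : ∀ J, deltaFn γ κ J = 1 → J ⊆ J₁ := by
    intro J hJ
    have hmem : J ∈ S := by
      simp only [hS, Finset.mem_filter]; exact ⟨Finset.mem_univ _, hJ⟩
    exact Finset.le_sup' id hmem
  refine ⟨J₁, ⟨hJ₁delta, hJ₁max⟩, ?_⟩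
  rintro J₂ ⟨hJ₂delta, hJ₂max⟩
  exact Finset.Subset.antisymm (hJ₁max J₂ hJ₂delta) (hJ₂max J₁ hJ₁delta)
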